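/- Let ω ∈ (0,1/2], δ ∈ (0,π], and define F(N;δ,ω) = (δ²/6)∑_{m=1}^∞ [mNδ/(mNδ − sin(mNδ))](sin(mπω)/m)² and F^∞ = (δ²/6)∑_{m=1}^∞ (sin(mπω)/m)². For x = Nδ ∈ (0,π), F(N;δ,ω) − F^∞ = (δ²/6)∑_{m=1}^∞ [sin(mx)/(mx − sin(mx))](sin(mπω)/m)² > 0. -/

import Mathlib

open Real

private lemma bern3_eval (r : ℝ) :
    (Polynomial.map (algebraMap ℚ ℝ) (Polynomial.bernoulli 3)).eval r
      = r ^ 3 - 3 / 2 * r ^ 2 + 1 / 2 * r := by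
  simp_rw [Polynomial.bernoulli, Finset.sum_range_succ, Finset.sum_range_zero,
    Polynomial.map_add, Polynomial.map_zero, Polynomial.map_monomial,
    Polynomial.eval_add, Polynomial.eval_zero, Polynomial.eval_monomial]
  rw [bernoulli_one, bernoulli_eq_bernoulli'_of_ne_one zero_ne_one, bernoulli'_zero,
    bernoulli_eq_bernoulli'_of_ne_one (by decide : (2:ℕ) ≠ 1), bernoulli'_two,
    bernoulli_eq_bernoulli'_of_ne_one (by decide : (3:ℕ) ≠ 1), bernoulli'_three]
  push_cast
  norm_num
  ring

private lemma hasSum_sin_div_cube {t : ℝ} (h0 : 0 ≤ t) (h2 : t ≤ 2 * π) :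
    HasSum (fun n : ℕ => Real.sin (n * t) / (n : ℝ) ^ 3)
      (t ^ 3 / 12 - π * t ^ 2 / 4 + π ^ 2 * t / 6) := by
  have hπ : (0:ℝ) < π := pi_pos
  have hmem : t / (2 * π) ∈ Set.Icc (0 : ℝ) 1 := by
    constructor
    · positivity
    · rw [div_le_one (by positivity)]; linarith
  have H := hasSum_one_div_nat_pow_mul_sin (k := 1) one_ne_zero hmem
  have hval : ((-1 : ℝ)) ^ (1 + 1) * (2 * π) ^ (2 * 1 + 1) / 2 / (Nat.factorial (2 * 1 + 1) : ℝ) *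
      (Polynomial.map (algebraMap ℚ ℝ) (Polynomial.bernoulli (2 * 1 + 1))).eval (t / (2 * π))
      = t ^ 3 / 12 - π * t ^ 2 / 4 + π ^ 2 * t / 6 := by
    rw [(by norm_num : 2 * 1 + 1 = 3), bern3_eval]
    norm_num [Nat.factorial]
    field_simp
    ring
  rw [hval] at H
  convert H using 2 with n
  rw [(by norm_num : 2 * 1 + 1 = 3)]
  have : 2 * π * n * (t / (2 * π)) = n * t := by field_simp
  rw [this]
  ring

private lemma sub_sin_mono {a b : ℝ} (h : a ≤ b) :
    a - Real.sin a ≤ b - Real.sin b := by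
  have h1 : Real.sin b - Real.sin a ≤ b - a := by
    have he := Real.sin_sub_sin b a
    have h2 : |Real.sin ((b - a) / 2)| ≤ |(b - a) / 2| := Real.abs_sin_le_abs
    have h3 : |Real.cos ((b + a) / 2)| ≤ 1 := Real.abs_cos_le_one _
    have h4 : |(b - a) / 2| = (b - a) / 2 := abs_of_nonneg (by linarith)
    calc Real.sin b - Real.sin a
        = 2 * Real.sin ((b - a) / 2) * Real.cos ((b + a) / 2) := he
      _ ≤ |2 * Real.sin ((b - a) / 2) * Real.cos ((b + a) / 2)| := le_abs_self _
      _ = 2 * (|Real.sin ((b - a) / 2)| * |Real.cos ((b + a) / 2)|) := by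
          rw [mul_assoc, abs_mul, abs_mul]; simp
      _ ≤ 2 * ((b - a) / 2 * 1) := by
          rw [h4] at h2
          have := abs_nonneg (Real.cos ((b + a) / 2))
          nlinarith [abs_nonneg (Real.sin ((b - a) / 2))]
      _ = b - a := by ring
  linarith

/-- Positivity of the key Fourier series `∑ sin(mx) sin²(my)/m³`. -/
private lemma keyPos {x y : ℝ} (hx0 : 0 < x) (hxπ : x < π) (hy0 : 0 < y)
    (hy2 : y ≤ π / 2) :
    ∃ S : ℝ, HasSum (fun m : ℕ =>
      Real.sin (((m : ℝ) + 1) * x) * Real.sin (((m : ℝ) + 1) * y) ^ 2 / ((m : ℝ) + 1) ^ 3) S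
      ∧ 0 < S := by
  have hπ : (0:ℝ) < π := pi_pos
  set P : ℝ → ℝ := fun t => t ^ 3 / 12 - π * t ^ 2 / 4 + π ^ 2 * t / 6 with hP
  have h1 : HasSum (fun n : ℕ => Real.sin (n * x) / (n : ℝ) ^ 3) (P x) :=
    hasSum_sin_div_cube hx0.le (by linarith)
  have h2 : HasSum (fun n : ℕ => Real.sin (n * (x + 2 * y)) / (n : ℝ) ^ 3) (P (x + 2 * y)) :=
    hasSum_sin_div_cube (by linarith) (by linarith)
  obtain ⟨S3, h3, hfin⟩ : ∃ S3 : ℝ,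
      HasSum (fun n : ℕ => Real.sin (n * (x - 2 * y)) / (n : ℝ) ^ 3) S3 ∧
        0 < P x / 2 - (P (x + 2 * y) + S3) / 4 := by
    rcases le_or_gt (2 * y) x with hc | hc
    · refine ⟨P (x - 2 * y), hasSum_sin_div_cube (by linarith) (by linarith), ?_⟩
      have hval : P x / 2 - (P (x + 2 * y) + P (x - 2 * y)) / 4
          = (2 * y) ^ 2 * (π - x) / 8 := by simp only [hP]; ring
      rw [hval]
      have : 0 < (2 * y) ^ 2 := by positivity
      nlinarith
    · have hneg := (hasSum_sin_div_cube (t := 2 * y - x) (by linarith) (by linarith)).neg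
      refine ⟨-P (2 * y - x), ?_, ?_⟩
      · convert hneg using 2 with n
        · rfl
        rw [(by ring : (n : ℝ) * (x - 2 * y) = -(n * (2 * y - x))), Real.sin_neg]
        ring
      · have hval : P x / 2 - (P (x + 2 * y) + -P (2 * y - x)) / 4
            = x * (2 * π * (2 * y) - (2 * y) ^ 2 - π * x) / 8 := by simp only [hP]; ring
        rw [hval]
        have h5 : 2 * π * (2 * y) - (2 * y) ^ 2 - π * x
            = π * (2 * y - x) + (2 * y) * (π - 2 * y) := by ring
        have h6 : 0 < π * (2 * y - x) := by nlinarith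
        have h7 : 0 ≤ (2 * y) * (π - 2 * y) := by nlinarith
        nlinarith
  set S := P x / 2 - (P (x + 2 * y) + S3) / 4 with hSdef
  have hcomb : HasSum (fun n : ℕ =>
      Real.sin (n * x) * Real.sin (n * y) ^ 2 / (n : ℝ) ^ 3) S := by
    have H := (h1.div_const 2).sub ((h2.add h3).div_const 4)
    convert H using 2 with n
    · rfl
    have htrig : ∀ A B : ℝ, Real.sin A * Real.sin B ^ 2
        = Real.sin A / 2 - (Real.sin (A + 2 * B) + Real.sin (A - 2 * B)) / 4 := by
      intro A B
      rw [Real.sin_add, Real.sin_sub, Real.sin_sq, Real.cos_sq]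
      ring
    have h8 : (n : ℝ) * x + 2 * ((n : ℝ) * y) = n * (x + 2 * y) := by ring
    have h9 : (n : ℝ) * x - 2 * ((n : ℝ) * y) = n * (x - 2 * y) := by ring
    have := htrig ((n : ℝ) * x) ((n : ℝ) * y)
    rw [h8, h9] at this
    rw [this]
    ring
  refine ⟨S, ?_, hfin⟩
  have H2 := (hasSum_nat_add_iff' (f := fun n : ℕ =>
    Real.sin (n * x) * Real.sin (n * y) ^ 2 / (n : ℝ) ^ 3) 1).mpr hcomb
  have hz0 : S - ∑ i ∈ Finset.range 1,
      (Real.sin (i * x) * Real.sin (i * y) ^ 2 / (i : ℝ) ^ 3) = S := by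
    simp
  rw [hz0] at H2
  have hfun : (fun m : ℕ =>
      Real.sin (((m : ℝ) + 1) * x) * Real.sin (((m : ℝ) + 1) * y) ^ 2 / ((m : ℝ) + 1) ^ 3)
      = fun n : ℕ => Real.sin ((((n + 1) : ℕ) : ℝ) * x) *
          Real.sin ((((n + 1) : ℕ) : ℝ) * y) ^ 2 / (((n + 1) : ℕ) : ℝ) ^ 3 := by
    funext m
    push_cast
    ring_nf
  rw [hfun]
  exact H2

theorem F_minus_Finfty_pos_first_interval (δ ω N : ℝ)
    (hδ : δ ∈ Set.Ioc (0:ℝ) π) (hω : ω ∈ Set.Ioc (0:ℝ) (1/2))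
    (hx : N * δ ∈ Set.Ioo (0:ℝ) π) :
    (δ ^ 2 / 6 * ∑' m : ℕ,
        ((m + 1 : ℕ) * N * δ / ((m + 1 : ℕ) * N * δ - Real.sin ((m + 1 : ℕ) * N * δ))) *
          (Real.sin ((m + 1 : ℕ) * π * ω) / (m + 1 : ℕ)) ^ 2) -
      (δ ^ 2 / 6 * ∑' m : ℕ,
        (Real.sin ((m + 1 : ℕ) * π * ω) / (m + 1 : ℕ)) ^ 2) =
      δ ^ 2 / 6 * ∑' m : ℕ,
        (Real.sin ((m + 1 : ℕ) * N * δ) /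
            ((m + 1 : ℕ) * N * δ - Real.sin ((m + 1 : ℕ) * N * δ))) *
          (Real.sin ((m + 1 : ℕ) * π * ω) / (m + 1 : ℕ)) ^ 2 ∧
    0 < δ ^ 2 / 6 * ∑' m : ℕ,
        (Real.sin ((m + 1 : ℕ) * N * δ) /
            ((m + 1 : ℕ) * N * δ - Real.sin ((m + 1 : ℕ) * N * δ))) *
          (Real.sin ((m + 1 : ℕ) * π * ω) / (m + 1 : ℕ)) ^ 2 := by
  obtain ⟨hδ0, hδπ⟩ := hδ
  obtain ⟨hω0, hω2⟩ := hω
  obtain ⟨hx0, hxπ⟩ := hx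
  have hπ : (0:ℝ) < π := pi_pos
  simp only [Nat.cast_add, Nat.cast_one, mul_assoc]
  set x := N * δ with hxdef
  set y := π * ω with hydef
  have hy0 : 0 < y := mul_pos hπ hω0
  have hy2 : y ≤ π / 2 := by
    rw [hydef]; nlinarith
  -- abbreviations
  set fb : ℕ → ℝ := fun m => (Real.sin (((m : ℝ) + 1) * y) / ((m : ℝ) + 1)) ^ 2 with hfb
  set fd : ℕ → ℝ := fun m =>
    Real.sin (((m : ℝ) + 1) * x) / (((m : ℝ) + 1) * x - Real.sin (((m : ℝ) + 1) * x)) * fb m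
    with hfd
  -- basic facts about the denominators
  have hm1 : ∀ m : ℕ, (0:ℝ) < (m : ℝ) + 1 := fun m => by positivity
  have htm : ∀ m : ℕ, x ≤ ((m : ℝ) + 1) * x := fun m => by
    nlinarith [hm1 m, (Nat.cast_nonneg m : (0:ℝ) ≤ m)]
  have htpos : ∀ m : ℕ, (0:ℝ) < ((m : ℝ) + 1) * x := fun m => lt_of_lt_of_le hx0 (htm m)
  have hxs : (0:ℝ) < x - Real.sin x := sub_pos.2 (Real.sin_lt hx0)
  have hden : ∀ m : ℕ, x - Real.sin x ≤ ((m : ℝ) + 1) * x - Real.sin (((m : ℝ) + 1) * x) :=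
    fun m => sub_sin_mono (htm m)
  have hdenpos : ∀ m : ℕ, (0:ℝ) < ((m : ℝ) + 1) * x - Real.sin (((m : ℝ) + 1) * x) :=
    fun m => lt_of_lt_of_le hxs (hden m)
  -- summability of the base p-series
  have hP : Summable (fun m : ℕ => (1 / ((m : ℝ) + 1)) ^ 2) := by
    have := (summable_nat_add_iff 1).mpr
      (Real.summable_one_div_nat_pow.mpr (by norm_num : 1 < 2))
    apply this.congr
    intro m
    push_cast
    rw [div_pow]
    norm_num
  have hfb_nonneg : ∀ m, 0 ≤ fb m := fun m => sq_nonneg _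
  have hfb_le : ∀ m : ℕ, fb m ≤ (1 / ((m : ℝ) + 1)) ^ 2 := by
    intro m
    simp only [hfb]
    rw [div_pow, div_pow, one_pow]
    apply div_le_div_of_nonneg_right ?_ (by positivity)
    · nlinarith [Real.neg_one_le_sin (((m : ℝ) + 1) * y), Real.sin_le_one (((m : ℝ) + 1) * y)]
  have hb : Summable fb := Summable.of_nonneg_of_le hfb_nonneg hfb_le hP
  -- summability of fd
  have hbound : ∀ m : ℕ, |fd m| ≤ (1 / (x - Real.sin x)) * (1 / ((m : ℝ) + 1)) ^ 2 := by
    intro m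
    simp only [hfd]
    rw [abs_mul, abs_of_nonneg (hfb_nonneg m), abs_div]
    have h1 : |Real.sin (((m : ℝ) + 1) * x)| ≤ 1 := Real.abs_sin_le_one _
    have h2 : |((m : ℝ) + 1) * x - Real.sin (((m : ℝ) + 1) * x)|
        = ((m : ℝ) + 1) * x - Real.sin (((m : ℝ) + 1) * x) := abs_of_pos (hdenpos m)
    rw [h2]
    have h3 : |Real.sin (((m : ℝ) + 1) * x)| /
        (((m : ℝ) + 1) * x - Real.sin (((m : ℝ) + 1) * x)) ≤ 1 / (x - Real.sin x) := by
      exact div_le_div₀ zero_le_one h1 hxs (hden m)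
    calc |Real.sin (((m : ℝ) + 1) * x)| /
          (((m : ℝ) + 1) * x - Real.sin (((m : ℝ) + 1) * x)) * fb m
        ≤ 1 / (x - Real.sin x) * fb m :=
          mul_le_mul_of_nonneg_right h3 (hfb_nonneg m)
      _ ≤ 1 / (x - Real.sin x) * (1 / ((m : ℝ) + 1)) ^ 2 :=
          mul_le_mul_of_nonneg_left (hfb_le m) (by positivity)
  have hd : Summable fd :=
    Summable.of_abs (Summable.of_nonneg_of_le (fun m => abs_nonneg _) hbound (hP.mul_left _))
  -- positivity of ∑ fd
  obtain ⟨S, hS, hSpos⟩ := keyPos hx0 hxπ hy0 hy2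
  have hab : HasSum (fun m : ℕ =>
      Real.sin (((m : ℝ) + 1) * x) / (((m : ℝ) + 1) * x) * fb m) (S / x) := by
    have := hS.div_const x
    convert this using 2 with m
    · rfl
    simp only [hfb]
    have hm : ((m : ℝ) + 1) ≠ 0 := (hm1 m).ne'
    field_simp
    try ring
    try exact Or.inl trivial
  have hab_le : ∀ m : ℕ,
      Real.sin (((m : ℝ) + 1) * x) / (((m : ℝ) + 1) * x) * fb m ≤ fd m := by
    intro m
    simp only [hfd]
    apply mul_le_mul_of_nonneg_right ?_ (hfb_nonneg m)
    set t := ((m : ℝ) + 1) * x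
    set s := Real.sin t
    have ht : (0:ℝ) < t := htpos m
    have hts : (0:ℝ) < t - s := hdenpos m
    have key : s / (t - s) - s / t = s ^ 2 / (t * (t - s)) := by
      field_simp
      ring
    nlinarith [sq_nonneg s, div_nonneg (sq_nonneg s) (mul_pos ht hts).le,
      key, (div_nonneg (sq_nonneg s) (mul_pos ht hts).le)]
  have hSd_pos : 0 < ∑' m, fd m := by
    have hle : S / x ≤ ∑' m, fd m := by
      rw [← hab.tsum_eq]
      exact Summable.tsum_le_tsum hab_le hab.summable hd
    exact lt_of_lt_of_le (div_pos hSpos hx0) hle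
  -- relate the first series to fb + fd
  have hf1 : (fun m : ℕ =>
      (((m : ℝ) + 1) * x / (((m : ℝ) + 1) * x - Real.sin (((m : ℝ) + 1) * x))) * fb m)
      = fun m => fb m + fd m := by
    funext m
    simp only [hfd]
    have hts : (((m : ℝ) + 1) * x - Real.sin (((m : ℝ) + 1) * x)) ≠ 0 := (hdenpos m).ne'
    field_simp
    ring
  constructor
  · rw [hf1, Summable.tsum_add hb hd]
    ring
  · exact mul_pos (by positivity) hSd_pos
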